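/- Let {ρ_i}_{i=1}^k be density matrices on a d-dimensional complex Hilbert space with k ≥ 3, and define ρ̂_j = (1/(k−1)) ∑_{i≠j} ρ_i. If F(ρ̂_j, ρ̂_l) = (k−2)/(k−1) for all j ≠ l, then the set {ρ_i} is pairwise orthogonal: tr(ρ_j ρ_l) = 0 for all j ≠ l. -/

import Mathlib

open Matrix BigOperators ComplexOrder Classical

/-- The positive semidefinite square root of a matrix (junk value `0` if the
matrix is not positive semidefinite). -/
noncomputable def psqrt {d : ℕ} (A : Matrix (Fin d) (Fin d) ℂ) :
    Matrix (Fin d) (Fin d) ℂ :=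
  if h : A.PosSemidef then
    h.1.eigenvectorUnitary.1 * diagonal ((↑) ∘ (√·) ∘ h.1.eigenvalues) *
      (star h.1.eigenvectorUnitary : Matrix (Fin d) (Fin d) ℂ) else 0

/-- The fidelity `F(ρ,σ) = tr((√ρ σ √ρ)^{1/2})` of two positive semidefinite
matrices. -/
noncomputable def fidelity {d : ℕ} (ρ σ : Matrix (Fin d) (Fin d) ℂ) : ℝ :=
  (psqrt (psqrt ρ * σ * psqrt ρ)).trace.re

noncomputable def Matrix.PosSemidef.sqrt {d : ℕ} {A : Matrix (Fin d) (Fin d) ℂ}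
    (h : A.PosSemidef) : Matrix (Fin d) (Fin d) ℂ :=
  h.1.eigenvectorUnitary.1 * diagonal ((↑) ∘ (√·) ∘ h.1.eigenvalues) *
      (star h.1.eigenvectorUnitary : Matrix (Fin d) (Fin d) ℂ)

section SqrtAux
open scoped MatrixOrder

lemma Matrix.PosSemidef.sqrt_eq_cfcSqrt {d : ℕ} {A : Matrix (Fin d) (Fin d) ℂ}
    (h : A.PosSemidef) : h.sqrt = CFC.sqrt A := by
  have h0 : 0 ≤ A := h.nonneg
  rw [CFC.sqrt_eq_cfc, cfc_nnreal_eq_real _ A, h.1.cfc_eq]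
  simp only [IsHermitian.cfc, Unitary.conjStarAlgAut_apply, Matrix.PosSemidef.sqrt]
  congr 3
  funext i
  simp [max_eq_left (h.eigenvalues_nonneg i)]

lemma Matrix.PosSemidef.posSemidef_sqrt {d : ℕ} {A : Matrix (Fin d) (Fin d) ℂ}
    (h : A.PosSemidef) : h.sqrt.PosSemidef := by
  rw [h.sqrt_eq_cfcSqrt]; exact (CFC.sqrt_nonneg A).posSemidef

lemma Matrix.PosSemidef.sqrt_mul_self {d : ℕ} {A : Matrix (Fin d) (Fin d) ℂ}
    (h : A.PosSemidef) : h.sqrt * h.sqrt = A := by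
  have h0 : 0 ≤ A := h.nonneg
  rw [h.sqrt_eq_cfcSqrt]; exact CFC.sqrt_mul_sqrt_self A

lemma Matrix.PosSemidef.eq_sqrt_of_sq_eq {d : ℕ} {A B : Matrix (Fin d) (Fin d) ℂ}
    (hA : A.PosSemidef) (hB : B.PosSemidef) (hAB : A ^ 2 = B) : A = hB.sqrt := by
  have h0 : 0 ≤ A := hA.nonneg
  rw [hB.sqrt_eq_cfcSqrt, ← hAB, CFC.sqrt_sq A]

end SqrtAux

set_option maxHeartbeats 3200000

variable {d : ℕ}

namespace OrthAux

local notation "Mat" => Matrix (Fin d) (Fin d) ℂ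

lemma psd_trace_nonneg {P : Mat} (hP : P.PosSemidef) : 0 ≤ P.trace := by
  rw [Matrix.trace]
  refine Finset.sum_nonneg fun i _ => ?_
  exact hP.diag_nonneg

lemma psd_trace_re_nonneg {P : Mat} (hP : P.PosSemidef) : 0 ≤ P.trace.re :=
  (Complex.le_def.mp (psd_trace_nonneg hP)).1

lemma psd_smul {P : Mat} (hP : P.PosSemidef) {c : ℝ} (hc : 0 ≤ c) :
    ((c : ℂ) • P).PosSemidef := by
  exact hP.smul (by exact_mod_cast Complex.zero_le_real.mpr hc)

lemma smul_one_posDef {c : ℝ} (hc : 0 < c) : ((c : ℂ) • (1 : Mat)).PosDef := by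
  have h : ((c : ℂ) • (1 : Mat)) = Matrix.diagonal (fun _ => (c : ℂ)) := by
    ext i j
    simp [Matrix.one_apply, Matrix.diagonal_apply]
  rw [h]
  refine Matrix.posDef_diagonal_iff.mpr fun i => ?_
  exact_mod_cast Complex.zero_lt_real.mpr hc

lemma psd_mul_trace_nonneg {P Q : Mat} (hP : P.PosSemidef) (hQ : Q.PosSemidef) :
    0 ≤ (P * Q).trace := by
  have h1 : (P * Q).trace = (hP.sqrt * Q * hP.sqrt).trace := by
    conv_lhs => rw [← hP.sqrt_mul_self]
    rw [Matrix.mul_assoc, Matrix.trace_mul_comm, Matrix.mul_assoc]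
  rw [h1]
  apply psd_trace_nonneg
  have := hQ.conjTranspose_mul_mul_same hP.sqrt
  rwa [hP.posSemidef_sqrt.1.eq] at this

lemma psd_mul_trace_re_nonneg {P Q : Mat} (hP : P.PosSemidef) (hQ : Q.PosSemidef) :
    0 ≤ (P * Q).trace.re :=
  (Complex.le_def.mp (psd_mul_trace_nonneg hP hQ)).1

lemma trace_re_mono {P Q : Mat} (h : (Q - P).PosSemidef) : P.trace.re ≤ Q.trace.re := by
  have := psd_trace_re_nonneg h
  rw [Matrix.trace_sub, Complex.sub_re] at this
  linarith

end OrthAux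

namespace OrthAux2
open OrthAux

local notation "Mat" => Matrix (Fin d) (Fin d) ℂ

lemma trace_conj_mul (A B : Mat) :
    (Aᴴ * B).trace = ∑ j, ∑ i, (starRingEnd ℂ) (A i j) * B i j := by
  simp only [Matrix.trace, Matrix.diag_apply, Matrix.mul_apply, Matrix.conjTranspose_apply]
  rfl

lemma trace_conj_self_re (A : Mat) :
    (Aᴴ * A).trace.re = ∑ j, ∑ i, ‖A i j‖ ^ 2 := by
  rw [trace_conj_mul, Complex.re_sum]
  congr 1; ext j
  rw [Complex.re_sum]
  congr 1; ext i
  rw [mul_comm, Complex.mul_conj, Complex.ofReal_re, Complex.sq_norm]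

lemma trace_conj_self_re_nonneg (A : Mat) : 0 ≤ (Aᴴ * A).trace.re := by
  rw [trace_conj_self_re]
  positivity

/-- Cauchy-Schwarz for the Frobenius inner product. -/
lemma cs_trace (A B : Mat) :
    (Aᴴ * B).trace.re ≤ Real.sqrt ((Aᴴ * A).trace.re) * Real.sqrt ((Bᴴ * B).trace.re) := by
  have h1 : (Aᴴ * B).trace.re ≤ ∑ j, ∑ i, ‖A i j‖ * ‖B i j‖ := by
    rw [trace_conj_mul, Complex.re_sum]
    refine Finset.sum_le_sum fun j _ => ?_
    rw [Complex.re_sum]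
    refine Finset.sum_le_sum fun i _ => ?_
    calc ((starRingEnd ℂ) (A i j) * B i j).re ≤ ‖(starRingEnd ℂ) (A i j) * B i j‖ :=
          Complex.re_le_norm _
      _ = ‖A i j‖ * ‖B i j‖ := by
          rw [norm_mul, Complex.norm_conj]
  refine h1.trans ?_
  rw [trace_conj_self_re, trace_conj_self_re]
  have := Real.sum_mul_le_sqrt_mul_sqrt (Finset.univ : Finset (Fin d × Fin d))
    (fun p => ‖A p.2 p.1‖) (fun p => ‖B p.2 p.1‖)
  simpa [Fintype.sum_prod_type, Finset.mul_sum, Finset.sum_mul] using this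

lemma trace_conj_swap_re (A B : Mat) : (Bᴴ * A).trace.re = (Aᴴ * B).trace.re := by
  have : (Bᴴ * A) = (Aᴴ * B)ᴴ := by simp [Matrix.conjTranspose_mul]
  rw [this, Matrix.trace_conjTranspose]
  simp

/-- Frobenius expansion of `‖X+Y‖²`. -/
lemma fro_expand (X Y : Mat) :
    ((X + Y)ᴴ * (X + Y)).trace.re
      = (Xᴴ * X).trace.re + 2 * (Xᴴ * Y).trace.re + (Yᴴ * Y).trace.re := by
  rw [Matrix.conjTranspose_add, Matrix.add_mul, Matrix.mul_add, Matrix.mul_add,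
    Matrix.trace_add, Matrix.trace_add, Matrix.trace_add]
  have := trace_conj_swap_re X Y
  simp only [Complex.add_re]
  linarith

end OrthAux2

namespace OrthAux3
open OrthAux OrthAux2

local notation "Mat" => Matrix (Fin d) (Fin d) ℂ

lemma posDef_isUnit_det {P : Mat} (hP : P.PosDef) : IsUnit P.det :=
  isUnit_iff_ne_zero.mpr (ne_of_gt hP.det_pos)

lemma sqrt_exists {T : Mat} (hT : T.PosSemidef) :
    ∃ S : Mat, S.PosSemidef ∧ S * S = T ∧ Sᴴ = S :=
  ⟨hT.sqrt, hT.posSemidef_sqrt, hT.sqrt_mul_self, hT.posSemidef_sqrt.1⟩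

lemma inv_comm {A X : Mat} (hd : IsUnit A.det) (h : X * A = A * X) :
    X * A⁻¹ = A⁻¹ * X := by
  have h1 : A⁻¹ * (A * X * A⁻¹) = X * A⁻¹ := by
    rw [← Matrix.mul_assoc, ← Matrix.mul_assoc, Matrix.nonsing_inv_mul _ hd, one_mul]
  have h2 : A⁻¹ * (X * A * A⁻¹) = A⁻¹ * X := by
    rw [Matrix.mul_assoc, Matrix.mul_nonsing_inv _ hd, Matrix.mul_one]
  rw [← h1, ← h, h2]

lemma shift_posDef {T : Mat} {c : ℝ} (hT : T.PosSemidef) (hc : 0 < c) :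
    (T + (c : ℂ) • 1).PosDef :=
  Matrix.PosDef.posSemidef_add hT (smul_one_posDef hc)

lemma shift_isUnit_det {T : Mat} {c : ℝ} (hT : T.PosSemidef) (hc : 0 < c) :
    IsUnit (T + (c : ℂ) • 1).det :=
  posDef_isUnit_det (shift_posDef hT hc)

lemma T_mul_shift_inv_psd {T : Mat} {c : ℝ} (hT : T.PosSemidef) (hc : 0 < c) :
    (T * (T + (c : ℂ) • 1)⁻¹).PosSemidef := by
  obtain ⟨S, hSpsd, hSS, hSh⟩ := sqrt_exists hT
  have hW : ((T + (c : ℂ) • 1)⁻¹).PosSemidef := (shift_posDef hT hc).inv.posSemidef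
  have hcommT : S * T = T * S := by rw [← hSS, Matrix.mul_assoc]
  have hcomm : S * (T + (c : ℂ) • 1) = (T + (c : ℂ) • 1) * S := by
    rw [Matrix.mul_add, Matrix.add_mul, hcommT, Matrix.smul_mul, Matrix.mul_smul, one_mul,
      Matrix.mul_one]
  have hcInv : S * (T + (c : ℂ) • 1)⁻¹ = (T + (c : ℂ) • 1)⁻¹ * S :=
    inv_comm (shift_isUnit_det hT hc) hcomm
  have e : T * (T + (c : ℂ) • 1)⁻¹ = Sᴴ * (T + (c : ℂ) • 1)⁻¹ * S := by
    calc T * (T + (c : ℂ) • 1)⁻¹ = S * S * (T + (c : ℂ) • 1)⁻¹ := by rw [hSS]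
      _ = S * (S * (T + (c : ℂ) • 1)⁻¹) := by rw [Matrix.mul_assoc]
      _ = S * ((T + (c : ℂ) • 1)⁻¹ * S) := by rw [hcInv]
      _ = Sᴴ * (T + (c : ℂ) • 1)⁻¹ * S := by rw [hSh, Matrix.mul_assoc]
  rw [e]
  exact hW.conjTranspose_mul_mul_same S

lemma trace_sq_shift_inv_le {T : Mat} {c : ℝ} (hT : T.PosSemidef) (hc : 0 < c) :
    (T * T * (T + (c : ℂ) • 1)⁻¹).trace.re ≤ T.trace.re := by
  have h2 := Matrix.mul_nonsing_inv _ (shift_isUnit_det hT hc)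
  have key : T - T * T * (T + (c : ℂ) • 1)⁻¹ = (c : ℂ) • (T * (T + (c : ℂ) • 1)⁻¹) := by
    have e : T * ((T + (c : ℂ) • 1) * (T + (c : ℂ) • 1)⁻¹)
        = T * T * (T + (c : ℂ) • 1)⁻¹ + (c : ℂ) • (T * (T + (c : ℂ) • 1)⁻¹) := by
      rw [← Matrix.mul_assoc, Matrix.mul_add, Matrix.mul_smul, Matrix.mul_one, Matrix.add_mul,
        Matrix.smul_mul]
    rw [h2, Matrix.mul_one] at e
    exact sub_eq_of_eq_add' e
  refine trace_re_mono ?_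
  rw [key]
  exact psd_smul (T_mul_shift_inv_psd hT hc) (le_of_lt hc)

lemma trace_mul_shift_inv_le {T : Mat} {c : ℝ} (hT : T.PosSemidef) (hc : 0 < c)
    {σ : Mat} (hσ : σ.PosSemidef) :
    (σ * (T + (c : ℂ) • 1)⁻¹).trace.re ≤ c⁻¹ * σ.trace.re := by
  have h2 := Matrix.mul_nonsing_inv _ (shift_isUnit_det hT hc)
  have expand : T * (T + (c : ℂ) • 1)⁻¹ + (c : ℂ) • (T + (c : ℂ) • 1)⁻¹
      = (T + (c : ℂ) • 1) * (T + (c : ℂ) • 1)⁻¹ := by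
    rw [Matrix.add_mul, Matrix.smul_mul, one_mul]
  rw [h2] at expand
  have hTW : T * (T + (c : ℂ) • 1)⁻¹ = 1 - (c : ℂ) • (T + (c : ℂ) • 1)⁻¹ :=
    eq_sub_of_add_eq expand
  have key : ((c⁻¹ : ℝ) : ℂ) • (1 : Mat) - (T + (c : ℂ) • 1)⁻¹
      = ((c⁻¹ : ℝ) : ℂ) • (T * (T + (c : ℂ) • 1)⁻¹) := by
    rw [hTW, smul_sub, smul_smul]
    have : ((c⁻¹ : ℝ) : ℂ) * (c : ℂ) = 1 := by
      rw [← Complex.ofReal_mul, inv_mul_cancel₀ (ne_of_gt hc), Complex.ofReal_one]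
    rw [this, one_smul]
  have h0 : 0 ≤ (σ * (((c⁻¹ : ℝ) : ℂ) • (1 : Mat) - (T + (c : ℂ) • 1)⁻¹)).trace.re := by
    rw [key]
    exact psd_mul_trace_re_nonneg hσ
      (psd_smul (T_mul_shift_inv_psd hT hc) (le_of_lt (inv_pos.mpr hc)))
  rw [Matrix.mul_sub, Matrix.trace_sub, Complex.sub_re, Matrix.mul_smul, Matrix.mul_one,
    Matrix.trace_smul, smul_eq_mul, Complex.re_ofReal_mul] at h0
  linarith
lemma aux_trace_sq {S : Mat} (hS : S.PosSemidef) : (S * S).trace.re ≤ (S.trace.re) ^ 2 := by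
  have hH := hS.1
  set U : Mat := (hH.eigenvectorUnitary : Mat) with hUdef
  set D : Mat := Matrix.diagonal (RCLike.ofReal ∘ hH.eigenvalues) with hDdef
  have hsp : S = U * D * star U := by
    conv_lhs => rw [hH.spectral_theorem]
    simp [Unitary.conjStarAlgAut_apply, hUdef, hDdef]
  have hU1 : star U * U = 1 := by
    exact Matrix.mem_unitaryGroup_iff'.mp hH.eigenvectorUnitary.2
  have htr : S.trace = D.trace := by
    rw [hsp, Matrix.trace_mul_comm, ← Matrix.mul_assoc, hU1, one_mul]
  have htr2 : (S * S).trace = (D * D).trace := by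
    have : S * S = U * (D * (star U * U) * D) * star U := by
      rw [hsp]; simp only [Matrix.mul_assoc]
    rw [this, hU1, Matrix.mul_one, Matrix.trace_mul_comm, ← Matrix.mul_assoc, ← Matrix.mul_assoc,
      hU1, one_mul]
  have hDtr : D.trace.re = ∑ i, hH.eigenvalues i := by
    rw [hDdef, Matrix.trace_diagonal, Complex.re_sum]
    simp
  have hDtr2 : (D * D).trace.re = ∑ i, (hH.eigenvalues i) ^ 2 := by
    rw [hDdef, Matrix.diagonal_mul_diagonal, Matrix.trace_diagonal, Complex.re_sum]
    congr 1; ext i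
    simp [← Complex.ofReal_mul, sq]
  rw [htr, htr2, hDtr, hDtr2]
  exact Finset.sum_sq_le_sq_sum_of_nonneg fun i _ => hS.eigenvalues_nonneg i

end OrthAux3

namespace OrthAux4
open OrthAux OrthAux2 OrthAux3

local notation "Mat" => Matrix (Fin d) (Fin d) ℂ

/-- Certificate inequality: for Hermitian invertible `Z`, PSD `A`, and arbitrary `U W`,
`2 Re tr(A + U Wᴴ) ≤ Re tr((A + UUᴴ) Z²) + Re tr((A + WWᴴ) Z⁻²)`. -/
lemma lemY {A U W Z : Mat} (hA : A.PosSemidef) (hZ : Zᴴ = Z) (hZdet : IsUnit Z.det) :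
    2 * (A.trace.re + (U * Wᴴ).trace.re)
      ≤ ((A + U * Uᴴ) * (Z * Z)).trace.re + ((A + W * Wᴴ) * (Z⁻¹ * Z⁻¹)).trace.re := by
  have hZi : Z * Z⁻¹ = 1 := Matrix.mul_nonsing_inv _ hZdet
  have hZi' : Z⁻¹ * Z = 1 := Matrix.nonsing_inv_mul _ hZdet
  have hZinvH : (Z⁻¹)ᴴ = Z⁻¹ := by rw [Matrix.conjTranspose_nonsing_inv, hZ]
  -- part 1 : A
  have hD : (Z - Z⁻¹)ᴴ * (Z - Z⁻¹) = Z * Z + Z⁻¹ * Z⁻¹ - 1 - 1 := by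
    rw [Matrix.conjTranspose_sub, hZ, hZinvH, Matrix.sub_mul, Matrix.mul_sub, Matrix.mul_sub,
      hZi, hZi']
    abel
  have p1 : 0 ≤ (A * ((Z - Z⁻¹)ᴴ * (Z - Z⁻¹))).trace.re :=
    psd_mul_trace_re_nonneg hA (Matrix.posSemidef_conjTranspose_mul_self _)
  have p1' : 0 ≤ (A * (Z * Z)).trace.re + (A * (Z⁻¹ * Z⁻¹)).trace.re - 2 * A.trace.re := by
    have e : A * ((Z - Z⁻¹)ᴴ * (Z - Z⁻¹)) = A * (Z * Z) + A * (Z⁻¹ * Z⁻¹) - A - A := by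
      rw [hD, Matrix.mul_sub, Matrix.mul_sub, Matrix.mul_add, Matrix.mul_one]
    rw [e, Matrix.trace_sub, Matrix.trace_sub, Matrix.trace_add, Complex.sub_re,
      Complex.sub_re, Complex.add_re] at p1
    linarith
  -- part 2 : U, W
  have p2 : 0 ≤ ((Z * U - Z⁻¹ * W)ᴴ * (Z * U - Z⁻¹ * W)).trace.re :=
    trace_conj_self_re_nonneg _
  have e1 : ((Z * U)ᴴ * (Z * U)).trace = ((U * Uᴴ) * (Z * Z)).trace := by
    have h : (Z * U)ᴴ * (Z * U) = Uᴴ * (Z * Z * U) := by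
      rw [Matrix.conjTranspose_mul, hZ]; simp only [Matrix.mul_assoc]
    rw [h, Matrix.trace_mul_comm, Matrix.mul_assoc, Matrix.trace_mul_comm]
  have e2 : ((Z⁻¹ * W)ᴴ * (Z⁻¹ * W)).trace = ((W * Wᴴ) * (Z⁻¹ * Z⁻¹)).trace := by
    have h : (Z⁻¹ * W)ᴴ * (Z⁻¹ * W) = Wᴴ * (Z⁻¹ * Z⁻¹ * W) := by
      rw [Matrix.conjTranspose_mul, hZinvH]; simp only [Matrix.mul_assoc]
    rw [h, Matrix.trace_mul_comm, Matrix.mul_assoc, Matrix.trace_mul_comm]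
  have e3 : ((Z * U)ᴴ * (Z⁻¹ * W)).trace.re = (U * Wᴴ).trace.re := by
    have : (Z * U)ᴴ * (Z⁻¹ * W) = Uᴴ * ((Z * Z⁻¹) * W) := by
      rw [Matrix.conjTranspose_mul, hZ]
      simp only [Matrix.mul_assoc]
    rw [this, hZi, one_mul]
    have h4 : (Uᴴ * W).trace = ((U * Wᴴ)ᴴ).trace := by
      rw [Matrix.conjTranspose_mul, Matrix.conjTranspose_conjTranspose,
        Matrix.trace_mul_comm]
    rw [h4, Matrix.trace_conjTranspose]
    simp
  -- expand p2
  have expand : ((Z * U - Z⁻¹ * W)ᴴ * (Z * U - Z⁻¹ * W)).trace.re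
      = ((Z * U)ᴴ * (Z * U)).trace.re + ((Z⁻¹ * W)ᴴ * (Z⁻¹ * W)).trace.re
        - 2 * ((Z * U)ᴴ * (Z⁻¹ * W)).trace.re := by
    rw [Matrix.conjTranspose_sub, Matrix.sub_mul, Matrix.mul_sub, Matrix.mul_sub,
      Matrix.trace_sub, Matrix.trace_sub, Matrix.trace_sub, Complex.sub_re, Complex.sub_re,
      Complex.sub_re]
    have := trace_conj_swap_re (Z * U) (Z⁻¹ * W)
    linarith
  rw [expand, e1, e2, e3] at p2
  -- combine
  have final1 : ((A + U * Uᴴ) * (Z * Z)).trace.re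
      = (A * (Z * Z)).trace.re + ((U * Uᴴ) * (Z * Z)).trace.re := by
    rw [Matrix.add_mul, Matrix.trace_add, Complex.add_re]
  have final2 : ((A + W * Wᴴ) * (Z⁻¹ * Z⁻¹)).trace.re
      = (A * (Z⁻¹ * Z⁻¹)).trace.re + ((W * Wᴴ) * (Z⁻¹ * Z⁻¹)).trace.re := by
    rw [Matrix.add_mul, Matrix.trace_add, Complex.add_re]
  rw [final1, final2]
  linarith

end OrthAux4

namespace OrthKey
open OrthAux OrthAux2 OrthAux3 OrthAux4

local notation "Mat" => Matrix (Fin d) (Fin d) ℂ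

lemma sqrt_package {T : Matrix (Fin d) (Fin d) ℂ} (hT : T.PosSemidef) :
    ∃ S : Matrix (Fin d) (Fin d) ℂ, S.PosSemidef ∧ Sᴴ = S ∧ S * S = T :=
  ⟨hT.sqrt, hT.posSemidef_sqrt, hT.posSemidef_sqrt.1.eq, hT.sqrt_mul_self⟩

lemma conj_psd {σ X : Matrix (Fin d) (Fin d) ℂ} (hσ : σ.PosSemidef) (hX : Xᴴ = X) :
    (X * σ * X).PosSemidef := by
  have := hσ.conjTranspose_mul_mul_same X
  rwa [hX] at this

lemma sq_det_isUnit {S T : Matrix (Fin d) (Fin d) ℂ} (hSS : S * S = T) (hT : T.PosDef) :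
    IsUnit S.det := by
  rw [isUnit_iff_ne_zero]
  intro h0
  have : T.det = 0 := by rw [← hSS, Matrix.det_mul, h0, mul_zero]
  exact (ne_of_gt hT.det_pos) this

theorem key {d : ℕ} {A B C : Matrix (Fin d) (Fin d) ℂ}
    (hA : A.PosSemidef) (hB : B.PosSemidef) (hC : C.PosSemidef)
    (hfe : fidelity (A + B) (A + C) = A.trace.re) : (B * C).trace = 0 := by
  have hρ : (A + B).PosSemidef := hA.add hB
  have hσ : (A + C).PosSemidef := hA.add hC
  obtain ⟨P₀, hP₀psd, hP₀h, hP₀sq⟩ := sqrt_package hρ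
  obtain ⟨sσ, hsσpsd, hsσh, hsσsq⟩ := sqrt_package hσ
  -- the fidelity matrix
  have hG₁ : (P₀ * (A + C) * P₀).PosSemidef := conj_psd hσ hP₀h
  have hPm : ∃ Pm : Matrix (Fin d) (Fin d) ℂ, Pm.PosSemidef ∧ Pmᴴ = Pm ∧
      Pm * Pm = P₀ * (A + C) * P₀ ∧ Pm.trace.re = A.trace.re := by
    -- here we must relate to `fidelity`, so reconstruct with the canonical sqrt
    obtain ⟨hP₀psd', hP₀h', hP₀sq'⟩ :
        (hρ.sqrt).PosSemidef ∧ (hρ.sqrt)ᴴ = hρ.sqrt ∧ hρ.sqrt * hρ.sqrt = A + B :=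
      ⟨hρ.posSemidef_sqrt, hρ.posSemidef_sqrt.1.eq, hρ.sqrt_mul_self⟩
    have hG₁' : (hρ.sqrt * (A + C) * hρ.sqrt).PosSemidef := conj_psd hσ hP₀h'
    have hfid : (hG₁'.sqrt).trace.re = A.trace.re := by
      rw [← hfe, fidelity]
      rw [show psqrt (A + B) = hρ.sqrt from dif_pos hρ]
      rw [show psqrt (hρ.sqrt * (A + C) * hρ.sqrt) = hG₁'.sqrt from dif_pos hG₁']
    -- both P₀ and hρ.sqrt are psd square roots of A+B, hence equal
    have hPeq : P₀ = hρ.sqrt := by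
      apply hP₀psd.eq_sqrt_of_sq_eq hρ
      rw [pow_two, hP₀sq]
    exact ⟨hG₁'.sqrt, hG₁'.posSemidef_sqrt, hG₁'.posSemidef_sqrt.1.eq,
      by rw [hG₁'.sqrt_mul_self, hPeq], hfid⟩
  obtain ⟨Pm, hPmpsd, hPmh, hPmsq, hPmtr⟩ := hPm
  set f := Pm.trace.re with hfdef
  have hf0 : 0 ≤ f := psd_trace_re_nonneg hPmpsd
  set s := (A + C).trace.re with hsdef
  have hs0 : 0 ≤ s := psd_trace_re_nonneg hσ
  -- main quantitative claim
  have main : ∀ θ : ℝ, 0 < θ → θ ≤ 1 → (B * C).trace.re ≤ 4 * θ := by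
    intro θ hθ hθ1
    obtain ⟨c₀, hc₀def⟩ : ∃ c₀ : ℝ, c₀ = 2 * Real.sqrt (f * s) + s + d + 1 := ⟨_, rfl⟩
    have hc₀1 : 1 ≤ c₀ := by
      have h1 : 0 ≤ Real.sqrt (f * s) := Real.sqrt_nonneg _
      have h2 : (0:ℝ) ≤ d := Nat.cast_nonneg d
      rw [hc₀def]; nlinarith
    have hc₀ : 0 < c₀ := lt_of_lt_of_le one_pos hc₀1
    obtain ⟨r, hrdef⟩ : ∃ r : ℝ, r = θ / c₀ := ⟨_, rfl⟩
    have hr0 : 0 < r := hrdef ▸ div_pos hθ hc₀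
    have hr1 : r ≤ 1 := by rw [hrdef]; exact div_le_one_of_le₀ (le_trans hθ1 hc₀1) hc₀.le
    have hrc₀ : r * c₀ = θ := by rw [hrdef]; field_simp
    obtain ⟨η, hηdef⟩ : ∃ η : ℝ, η = r ^ 2 := ⟨_, rfl⟩
    have hη0 : 0 < η := by rw [hηdef]; positivity
    have hη1 : η ≤ 1 := by rw [hηdef]; nlinarith
    have hsqrtη : Real.sqrt η = r := by rw [hηdef, Real.sqrt_sq hr0.le]
    have hηr : η ≤ r := by rw [hηdef]; nlinarith
    -- ==================== Stage η ====================
    obtain ⟨R, hRdef⟩ : ∃ R : Matrix (Fin d) (Fin d) ℂ, R = P₀ + (η : ℂ) • 1 := ⟨_, rfl⟩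
    have hRpd : R.PosDef := hRdef ▸ shift_posDef hP₀psd hη0
    have hRdet : IsUnit R.det := posDef_isUnit_det hRpd
    have hRh : Rᴴ = R := hRpd.isHermitian.eq
    have hG : (R * (A + C) * R).PosSemidef := conj_psd hσ hRh
    obtain ⟨Tg, hTgpsd, hTgh, hTgsq⟩ := sqrt_package hG
    have hTgtr0 : 0 ≤ Tg.trace.re := psd_trace_re_nonneg hTgpsd
    -- Stage η estimate : Tg.trace.re ≤ f + θ
    have Sη : Tg.trace.re ≤ f + θ := by
      have hPη : (Pm + (η : ℂ) • 1).PosDef := shift_posDef hPmpsd hη0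
      have hPηdet : IsUnit (Pm + (η : ℂ) • 1).det := posDef_isUnit_det hPη
      have hW'pd : ((Pm + (η : ℂ) • 1)⁻¹).PosDef := hPη.inv
      obtain ⟨Z', hZ'psd, hZ'h, hZ'sq⟩ := sqrt_package hW'pd.posSemidef
      have hZ'det : IsUnit Z'.det := sq_det_isUnit hZ'sq hW'pd
      have hZ'inv : Z'⁻¹ * Z'⁻¹ = Pm + (η : ℂ) • 1 := by
        rw [← Matrix.mul_inv_rev, hZ'sq, Matrix.nonsing_inv_nonsing_inv _ hPηdet]
      have hZ'invH : (Z'⁻¹)ᴴ = Z'⁻¹ := by rw [Matrix.conjTranspose_nonsing_inv, hZ'h]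
      -- variational step
      have t1 : Tg.trace = ((Z'⁻¹)ᴴ * (Tg * Z')).trace := by
        rw [hZ'invH, Matrix.trace_mul_comm, Matrix.mul_assoc,
          Matrix.mul_nonsing_inv _ hZ'det, Matrix.mul_one]
      have w1nn : 0 ≤ ((Z'⁻¹)ᴴ * Z'⁻¹).trace.re := trace_conj_self_re_nonneg _
      have w2nn : 0 ≤ ((Tg * Z')ᴴ * (Tg * Z')).trace.re := trace_conj_self_re_nonneg _
      have tcs : Tg.trace.re ≤ Real.sqrt (((Z'⁻¹)ᴴ * Z'⁻¹).trace.re) *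
          Real.sqrt (((Tg * Z')ᴴ * (Tg * Z')).trace.re) := by
        rw [show Tg.trace.re = ((Z'⁻¹)ᴴ * (Tg * Z')).trace.re from by rw [← t1]]
        exact cs_trace _ _
      -- w1 value
      have w1val : ((Z'⁻¹)ᴴ * Z'⁻¹).trace.re = f + η * d := by
        rw [hZ'invH, hZ'inv, Matrix.trace_add, Matrix.trace_smul, Complex.add_re,
          smul_eq_mul, Complex.re_ofReal_mul, Matrix.trace_one]
        simp [hfdef]
      have hsσsq' : ∀ X : Matrix (Fin d) (Fin d) ℂ, sσ * (sσ * X) = (A + C) * X := fun X => by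
        rw [← Matrix.mul_assoc, hsσsq]
      -- w2 expansion
      have hMdef : sσ * R = sσ * P₀ + (η : ℂ) • sσ := by
        rw [hRdef, Matrix.mul_add, Matrix.mul_smul, Matrix.mul_one]
      have w2eq : ((Tg * Z')ᴴ * (Tg * Z')).trace.re
          = (((sσ * R) * Z')ᴴ * ((sσ * R) * Z')).trace.re := by
        have l1 : (Tg * Z')ᴴ * (Tg * Z') = Z' * ((Tg * Tg) * Z') := by
          rw [Matrix.conjTranspose_mul, hTgh, hZ'h]
          simp only [Matrix.mul_assoc]
        have l2 : ((sσ * R) * Z')ᴴ * ((sσ * R) * Z') = Z' * ((R * (A + C) * R) * Z') := by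
          rw [Matrix.conjTranspose_mul, Matrix.conjTranspose_mul, hsσh, hRh, hZ'h]
          simp only [Matrix.mul_assoc, hsσsq']
        rw [l1, l2, hTgsq]
      -- the three terms
      have ta : (((sσ * P₀) * Z')ᴴ * ((sσ * P₀) * Z')).trace.re ≤ f := by
        have l : ((sσ * P₀) * Z')ᴴ * ((sσ * P₀) * Z') = Z' * ((P₀ * (A + C) * P₀) * Z') := by
          rw [Matrix.conjTranspose_mul, Matrix.conjTranspose_mul, hsσh, hP₀h, hZ'h]
          simp only [Matrix.mul_assoc, hsσsq']
        have l2 : (Z' * ((P₀ * (A + C) * P₀) * Z')).trace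
            = ((Pm * Pm) * (Pm + (η : ℂ) • 1)⁻¹).trace := by
          rw [Matrix.trace_mul_comm, Matrix.mul_assoc, hZ'sq, ← hPmsq]
        rw [l, l2]
        exact trace_sq_shift_inv_le hPmpsd hη0
      have tcval : ((sσ * Z')ᴴ * (sσ * Z')).trace.re ≤ η⁻¹ * s := by
        have l : (sσ * Z')ᴴ * (sσ * Z') = Z' * ((A + C) * Z') := by
          rw [Matrix.conjTranspose_mul, hsσh, hZ'h]
          simp only [Matrix.mul_assoc, hsσsq']
        have l2 : (Z' * ((A + C) * Z')).trace = ((A + C) * (Pm + (η : ℂ) • 1)⁻¹).trace := by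
          rw [Matrix.trace_mul_comm, Matrix.mul_assoc, hZ'sq]
        rw [l, l2]
        exact trace_mul_shift_inv_le hPmpsd hη0 hσ
      -- expansion of M = sσ R
      have hsplit : (sσ * R) * Z' = (sσ * P₀) * Z' + ((η : ℂ) • sσ) * Z' := by
        rw [hMdef, Matrix.add_mul]
      have hExp := fro_expand ((sσ * P₀) * Z') (((η : ℂ) • sσ) * Z')
      have hX2smul : ((η : ℂ) • sσ) * Z' = (η : ℂ) • (sσ * Z') := Matrix.smul_mul _ _ _
      -- cross term
      have tb : (((sσ * P₀) * Z')ᴴ * (((η : ℂ) • sσ) * Z')).trace.re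
          ≤ η * (Real.sqrt f * Real.sqrt (η⁻¹ * s)) := by
        have e1 : (((sσ * P₀) * Z')ᴴ * (((η : ℂ) • sσ) * Z')).trace
            = (η : ℂ) * (((sσ * P₀) * Z')ᴴ * (sσ * Z')).trace := by
          rw [hX2smul, Matrix.mul_smul, Matrix.trace_smul, smul_eq_mul]
        have e2 : (((sσ * P₀) * Z')ᴴ * (((η : ℂ) • sσ) * Z')).trace.re
            = η * (((sσ * P₀) * Z')ᴴ * (sσ * Z')).trace.re := by
          rw [e1, Complex.re_ofReal_mul]
        rw [e2]
        refine mul_le_mul_of_nonneg_left ?_ hη0.le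
        refine (cs_trace _ _).trans ?_
        have s1 : Real.sqrt ((((sσ * P₀) * Z')ᴴ * ((sσ * P₀) * Z')).trace.re) ≤ Real.sqrt f :=
          Real.sqrt_le_sqrt ta
        have s2 : Real.sqrt (((sσ * Z')ᴴ * (sσ * Z')).trace.re) ≤ Real.sqrt (η⁻¹ * s) :=
          Real.sqrt_le_sqrt tcval
        exact mul_le_mul s1 s2 (Real.sqrt_nonneg _) (Real.sqrt_nonneg _)
      -- square term
      have tc : ((((η : ℂ) • sσ) * Z')ᴴ * (((η : ℂ) • sσ) * Z')).trace.re
          ≤ η * η * (η⁻¹ * s) := by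
        have e1 : (((η : ℂ) • sσ) * Z')ᴴ * (((η : ℂ) • sσ) * Z')
            = ((η * η : ℝ) : ℂ) • ((sσ * Z')ᴴ * (sσ * Z')) := by
          rw [hX2smul, Matrix.conjTranspose_smul, Matrix.smul_mul, Matrix.mul_smul, smul_smul]
          congr 1
          rw [Complex.star_def, Complex.conj_ofReal, ← Complex.ofReal_mul]
        rw [e1, Matrix.trace_smul, smul_eq_mul, Complex.re_ofReal_mul]
        exact mul_le_mul_of_nonneg_left tcval (by positivity)
      -- assemble w2
      have w2b : (((sσ * R) * Z')ᴴ * ((sσ * R) * Z')).trace.re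
          ≤ f + 2 * (η * (Real.sqrt f * Real.sqrt (η⁻¹ * s))) + η * η * (η⁻¹ * s) := by
        rw [hsplit, hExp]
        have h2 : (((sσ * P₀) * Z')ᴴ * (((η : ℂ) • sσ) * Z')).trace.re
            ≤ η * (Real.sqrt f * Real.sqrt (η⁻¹ * s)) := tb
        linarith
      -- sqrt algebra
      have hrne : r ≠ 0 := ne_of_gt hr0
      have halg : η * (Real.sqrt f * Real.sqrt (η⁻¹ * s)) = Real.sqrt (f * s) * r := by
        rw [Real.sqrt_mul (inv_nonneg.mpr hη0.le), Real.sqrt_inv, hsqrtη,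
          Real.sqrt_mul hf0, hηdef]
        field_simp
      have hη_cancel : η * η * (η⁻¹ * s) = η * s := by
        field_simp
      have w2b' : (((sσ * R) * Z')ᴴ * ((sσ * R) * Z')).trace.re
          ≤ f + 2 * (Real.sqrt (f * s) * r) + r * s := by
        rw [halg, hη_cancel] at w2b
        have : η * s ≤ r * s := mul_le_mul_of_nonneg_right hηr hs0
        linarith
      -- AM-GM finish
      have hw1v : ((Z'⁻¹)ᴴ * Z'⁻¹).trace.re ≤ f + r * d := by
        rw [w1val]
        have : η * d ≤ r * d := mul_le_mul_of_nonneg_right hηr (Nat.cast_nonneg d)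
        linarith
      have hAM : Tg.trace.re ≤ (((Z'⁻¹)ᴴ * Z'⁻¹).trace.re
          + (((sσ * R) * Z')ᴴ * ((sσ * R) * Z')).trace.re) / 2 := by
        refine tcs.trans ?_
        rw [w2eq]
        obtain ⟨a1, ha1⟩ : ∃ a1 : ℝ, a1 = ((Z'⁻¹)ᴴ * Z'⁻¹).trace.re := ⟨_, rfl⟩
        obtain ⟨a2, ha2⟩ : ∃ a2 : ℝ,
            a2 = (((sσ * R) * Z')ᴴ * ((sσ * R) * Z')).trace.re := ⟨_, rfl⟩
        rw [← ha1, ← ha2]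
        have h1 : 0 ≤ a1 := ha1 ▸ w1nn
        have h2 : 0 ≤ a2 := ha2 ▸ trace_conj_self_re_nonneg (((sσ * R) * Z'))
        nlinarith [sq_nonneg (Real.sqrt a1 - Real.sqrt a2), Real.sq_sqrt h1, Real.sq_sqrt h2]
      have hfinal : Tg.trace.re ≤ f + r * c₀ := by
        have hsq : 0 ≤ Real.sqrt (f * s) := Real.sqrt_nonneg _
        rw [hc₀def]
        have hd0 : (0:ℝ) ≤ d := Nat.cast_nonneg d
        nlinarith [hAM, hw1v, w2b']
      rw [hrc₀] at hfinal
      exact hfinal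
    -- ==================== Stage δ and ε ====================
    obtain ⟨δ, hδdef⟩ : ∃ δ : ℝ, δ = θ / (d + 1) := ⟨_, rfl⟩
    have hδ0 : 0 < δ := by rw [hδdef]; positivity
    have hTgδpd : (Tg + (δ : ℂ) • 1).PosDef := shift_posDef hTgpsd hδ0
    have hTgδdet := posDef_isUnit_det hTgδpd
    obtain ⟨Y, hYdef⟩ : ∃ Y : Matrix (Fin d) (Fin d) ℂ,
        Y = R⁻¹ * (Tg + (δ : ℂ) • 1) * R⁻¹ := ⟨_, rfl⟩
    have hRinvH : (R⁻¹)ᴴ = R⁻¹ := by rw [Matrix.conjTranspose_nonsing_inv, hRh]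
    have hYpsd : Y.PosSemidef := by
      rw [hYdef]; exact conj_psd hTgδpd.posSemidef hRinvH
    have hYinv : Y⁻¹ = R * (Tg + (δ : ℂ) • 1)⁻¹ * R := by
      apply Matrix.inv_eq_right_inv
      have h1 : Y * (R * (Tg + (δ : ℂ) • 1)⁻¹ * R)
          = R⁻¹ * ((Tg + (δ : ℂ) • 1) * ((R⁻¹ * R) * ((Tg + (δ : ℂ) • 1)⁻¹ * R))) := by
        rw [hYdef]; simp only [Matrix.mul_assoc]
      rw [h1, Matrix.nonsing_inv_mul _ hRdet, one_mul, ← Matrix.mul_assoc (Tg + (δ : ℂ) • 1),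
        Matrix.mul_nonsing_inv _ hTgδdet, one_mul, Matrix.nonsing_inv_mul _ hRdet]
    have hYdetU : IsUnit Y.det := by
      rw [hYdef, Matrix.det_mul, Matrix.det_mul, isUnit_iff_ne_zero]
      have h1 : R⁻¹.det ≠ 0 :=
        isUnit_iff_ne_zero.mp (Matrix.isUnit_nonsing_inv_det R hRdet)
      have h2 : (Tg + (δ : ℂ) • 1).det ≠ 0 := ne_of_gt hTgδpd.det_pos
      exact mul_ne_zero (mul_ne_zero h1 h2) h1
    have hy0 : 0 ≤ Y.trace.re := psd_trace_re_nonneg hYpsd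
    obtain ⟨ε, hεdef⟩ : ∃ ε : ℝ, ε = θ / (Y.trace.re + 1) := ⟨_, rfl⟩
    have hε0 : 0 < ε := by rw [hεdef]; positivity
    -- attainment side
    have hBεpd : (B + (ε : ℂ) • 1).PosDef := shift_posDef hB hε0
    obtain ⟨U, hUpsd, hUh, hUsq⟩ := sqrt_package hBεpd.posSemidef
    have hUdet : IsUnit U.det := sq_det_isUnit hUsq hBεpd
    have hU1 : U⁻¹ * U = 1 := Matrix.nonsing_inv_mul _ hUdet
    have hU2 : U * U⁻¹ = 1 := Matrix.mul_nonsing_inv _ hUdet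
    have hUinvH : (U⁻¹)ᴴ = U⁻¹ := by rw [Matrix.conjTranspose_nonsing_inv, hUh]
    have hUCU : (U * C * U).PosSemidef := conj_psd hC hUh
    obtain ⟨Tε, hTεpsd, hTεh, hTεsq⟩ := sqrt_package hUCU
    have hFε0 : 0 ≤ Tε.trace.re := psd_trace_re_nonneg hTεpsd
    -- Z from Y
    obtain ⟨Z, hZpsd, hZh, hZsq⟩ := sqrt_package hYpsd
    have hZdet : IsUnit Z.det := by
      rw [isUnit_iff_ne_zero]
      intro h0
      have : Y.det = 0 := by rw [← hZsq, Matrix.det_mul, h0, mul_zero]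
      exact (isUnit_iff_ne_zero.mp hYdetU) this
    have hZZinv : Z⁻¹ * Z⁻¹ = Y⁻¹ := by
      rw [← Matrix.mul_inv_rev]
      exact congrArg Inv.inv hZsq
    -- apply lemY with W := (Tε * U⁻¹)ᴴ
    have hKmH : (Tε * U⁻¹)ᴴ = U⁻¹ * Tε := by
      rw [Matrix.conjTranspose_mul, hUinvH, hTεh]
    have hWW : (Tε * U⁻¹)ᴴ * ((Tε * U⁻¹)ᴴ)ᴴ = C := by
      rw [Matrix.conjTranspose_conjTranspose, hKmH]
      calc U⁻¹ * Tε * (Tε * U⁻¹)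
          = U⁻¹ * (Tε * Tε) * U⁻¹ := by simp only [Matrix.mul_assoc]
        _ = U⁻¹ * (U * C * U) * U⁻¹ := by rw [hTεsq]
        _ = (U⁻¹ * U) * C * (U * U⁻¹) := by simp only [Matrix.mul_assoc]
        _ = C := by rw [hU1, hU2, one_mul, Matrix.mul_one]
    have hUW : U * ((Tε * U⁻¹)ᴴ)ᴴ = U * (Tε * U⁻¹) := by
      rw [Matrix.conjTranspose_conjTranspose]
    have hUWtr : (U * (Tε * U⁻¹)).trace = Tε.trace := by
      rw [Matrix.trace_mul_comm, Matrix.mul_assoc, hU1, Matrix.mul_one]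
    have hUUH : U * Uᴴ = B + (ε : ℂ) • 1 := by rw [hUh, hUsq]
    have ineq0 := lemY (U := U) (W := (Tε * U⁻¹)ᴴ) (Z := Z) hA hZh hZdet
    rw [hUW, hUWtr, hWW, hZsq, hZZinv, hUUH] at ineq0
    -- term 1
    have hterm1 : ((A + (B + (ε : ℂ) • 1)) * Y).trace.re
        ≤ Tg.trace.re + δ * d + ε * Y.trace.re := by
      have hsplit : (A + (B + (ε : ℂ) • 1)) * Y = (A + B) * Y + (ε : ℂ) • Y := by
        rw [← add_assoc, Matrix.add_mul, Matrix.smul_mul, one_mul]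
      have hRR : (R * R - (A + B)).PosSemidef := by
        have e : R * R - (A + B)
            = (η : ℂ) • P₀ + ((η : ℂ) • P₀ + ((η * η : ℝ) : ℂ) • 1) := by
          rw [hRdef]
          simp only [Matrix.add_mul, Matrix.mul_add, Matrix.smul_mul, Matrix.mul_smul, one_mul,
            Matrix.mul_one, hP₀sq, smul_smul, smul_add, ← Complex.ofReal_mul]
          abel
        rw [e]
        exact (psd_smul hP₀psd hη0.le).add ((psd_smul hP₀psd hη0.le).add
          (psd_smul (Matrix.PosSemidef.one) (by positivity)))
      have h1 : ((A + B) * Y).trace.re ≤ ((R * R) * Y).trace.re := by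
        have h0 := psd_mul_trace_re_nonneg hRR hYpsd
        rw [Matrix.sub_mul, Matrix.trace_sub, Complex.sub_re] at h0
        linarith
      have h2 : ((R * R) * Y).trace = (Tg + (δ : ℂ) • 1).trace := by
        have e : R * Y * R = Tg + (δ : ℂ) • 1 := by
          have e1 : R * Y * R = (R * R⁻¹) * ((Tg + (δ : ℂ) • 1) * (R⁻¹ * R)) := by
            rw [hYdef]; simp only [Matrix.mul_assoc]
          rw [e1, Matrix.mul_nonsing_inv _ hRdet, Matrix.nonsing_inv_mul _ hRdet, one_mul,
            Matrix.mul_one]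
        rw [Matrix.mul_assoc, Matrix.trace_mul_comm, e]
      have h3 : (Tg + (δ : ℂ) • 1).trace.re = Tg.trace.re + δ * d := by
        rw [Matrix.trace_add, Matrix.trace_smul, Complex.add_re,
          smul_eq_mul, Complex.re_ofReal_mul, Matrix.trace_one]
        simp
      have h4 : ((ε : ℂ) • Y).trace.re = ε * Y.trace.re := by
        rw [Matrix.trace_smul, smul_eq_mul, Complex.re_ofReal_mul]
      rw [hsplit, Matrix.trace_add, Complex.add_re, h4]
      rw [h2, h3] at h1
      linarith
    -- term 2
    have hterm2 : ((A + C) * Y⁻¹).trace.re ≤ Tg.trace.re := by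
      have e : ((A + C) * Y⁻¹).trace = ((Tg * Tg) * (Tg + (δ : ℂ) • 1)⁻¹).trace := by
        rw [hYinv, hTgsq]
        have e1 : (A + C) * (R * (Tg + (δ : ℂ) • 1)⁻¹ * R)
            = ((A + C) * R * (Tg + (δ : ℂ) • 1)⁻¹) * R := by
          simp only [Matrix.mul_assoc]
        rw [e1, Matrix.trace_mul_comm]
        have e2 : R * ((A + C) * R * (Tg + (δ : ℂ) • 1)⁻¹)
            = (R * (A + C) * R) * (Tg + (δ : ℂ) • 1)⁻¹ := by
          simp only [Matrix.mul_assoc]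
        rw [e2]
      rw [e]
      exact trace_sq_shift_inv_le hTgpsd hδ0
    -- combine
    have hδd : δ * d ≤ θ := by
      rw [hδdef, div_mul_eq_mul_div, div_le_iff₀ (by positivity)]
      nlinarith [Nat.cast_nonneg (α := ℝ) d]
    have hεy : ε * Y.trace.re ≤ θ := by
      rw [hεdef, div_mul_eq_mul_div, div_le_iff₀ (by positivity)]
      nlinarith
    have hFε2θ : Tε.trace.re ≤ 2 * θ := by
      rw [hPmtr] at Sη
      linarith [ineq0, hterm1, hterm2, Sη]
    -- final chain
    have hBC1 : (B * C).trace.re ≤ ((B + (ε : ℂ) • 1) * C).trace.re := by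
      have h0 : 0 ≤ (((ε : ℂ) • 1) * C).trace.re := by
        refine psd_mul_trace_re_nonneg ?_ hC
        exact psd_smul Matrix.PosSemidef.one hε0.le
      rw [Matrix.add_mul, Matrix.trace_add, Complex.add_re]
      linarith
    have hBC2 : ((B + (ε : ℂ) • 1) * C).trace = (Tε * Tε).trace := by
      rw [hTεsq, ← hUsq, Matrix.mul_assoc, Matrix.trace_mul_comm]
    have hBC3 : (Tε * Tε).trace.re ≤ (Tε.trace.re) ^ 2 := aux_trace_sq hTεpsd
    have hFsq : (Tε.trace.re) ^ 2 ≤ 4 * θ := by nlinarith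
    rw [hBC2] at hBC1
    linarith
  -- conclude from main
  have hre : (B * C).trace.re ≤ 0 := by
    by_contra hcon
    push_neg at hcon
    have hθ : 0 < min 1 ((B * C).trace.re / 8) := lt_min one_pos (by positivity)
    have h1 := main _ hθ (min_le_left _ _)
    have h2 : 4 * min 1 ((B * C).trace.re / 8) ≤ 4 * ((B * C).trace.re / 8) := by
      nlinarith [min_le_right 1 ((B * C).trace.re / 8)]
    linarith
  have hge := psd_mul_trace_nonneg hB hC
  obtain ⟨h1, h2⟩ := Complex.le_def.mp hge
  apply Complex.ext
  · simp only [Complex.zero_re] at h1 ⊢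
    linarith
  · simp only [Complex.zero_im] at h2 ⊢
    exact h2.symm

end OrthKey


/-- If the uniform mixtures `ρ̂ⱼ = (1/(k-1)) ∑_{i≠j} ρᵢ` satisfy
`F(ρ̂ⱼ, ρ̂ₗ) = (k-2)/(k-1)` for all `j ≠ l`, then the density matrices `ρᵢ`
are pairwise orthogonal. -/
theorem orthogonal_of_fidelity_of_leave_one_out
    {d k : ℕ} (hk : 3 ≤ k) (ρ : Fin k → Matrix (Fin d) (Fin d) ℂ)
    (hρ : ∀ i, (ρ i).PosSemidef) (hρtr : ∀ i, (ρ i).trace = 1)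
    (ρhat : Fin k → Matrix (Fin d) (Fin d) ℂ)
    (hρhat : ∀ j, ρhat j = ((k : ℂ) - 1)⁻¹ • ∑ i ∈ Finset.univ \ {j}, ρ i)
    (hfid : ∀ j l, j ≠ l → fidelity (ρhat j) (ρhat l) = ((k : ℝ) - 2) / ((k : ℝ) - 1)) :
    ∀ j l, j ≠ l → (ρ j * ρ l).trace = 0 := by
  intro j l hjl
  have hk1R : (1 : ℝ) < (k : ℝ) := by exact_mod_cast lt_of_lt_of_le (by norm_num) hk
  have hkc : ((k : ℂ) - 1) ≠ 0 := by
    intro h0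
    have : (k : ℂ) = 1 := by linear_combination h0
    rw [show (1 : ℂ) = ((1 : ℕ) : ℂ) from by norm_num] at this
    have := Nat.cast_injective (R := ℂ) this
    omega
  have hcast : ((k : ℂ) - 1)⁻¹ = ((((k : ℝ) - 1)⁻¹ : ℝ) : ℂ) := by
    rw [Complex.ofReal_inv, Complex.ofReal_sub, Complex.ofReal_natCast, Complex.ofReal_one]
  have hc0 : (0 : ℝ) ≤ ((k : ℝ) - 1)⁻¹ := by
    have : (0:ℝ) < (k : ℝ) - 1 := by linarith
    positivity
  -- the three pieces
  have hsumpsd : (∑ i ∈ Finset.univ \ {j, l}, ρ i).PosSemidef := by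
    refine Finset.sum_induction _ _ (fun a b ha hb => ha.add hb) Matrix.PosSemidef.zero ?_
    exact fun i _ => hρ i
  have hA : (((k : ℂ) - 1)⁻¹ • ∑ i ∈ Finset.univ \ {j, l}, ρ i).PosSemidef := by
    rw [hcast]; exact OrthAux.psd_smul hsumpsd hc0
  have hB : (((k : ℂ) - 1)⁻¹ • ρ l).PosSemidef := by
    rw [hcast]; exact OrthAux.psd_smul (hρ l) hc0
  have hC : (((k : ℂ) - 1)⁻¹ • ρ j).PosSemidef := by
    rw [hcast]; exact OrthAux.psd_smul (hρ j) hc0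
  -- decomposition of the leave-one-out sums
  have hsdiff1 : (Finset.univ \ {j}) \ {l} = Finset.univ \ ({j, l} : Finset (Fin k)) := by
    ext x
    simp [Finset.mem_sdiff]
    try tauto
  have hsdiff2 : (Finset.univ \ {l}) \ {j} = Finset.univ \ ({j, l} : Finset (Fin k)) := by
    ext x
    simp [Finset.mem_sdiff]
    try tauto
  have hmem1 : l ∈ Finset.univ \ ({j} : Finset (Fin k)) := by
    simp [Finset.mem_sdiff, hjl.symm]
  have hmem2 : j ∈ Finset.univ \ ({l} : Finset (Fin k)) := by
    simp [Finset.mem_sdiff, hjl]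
  have hAB : ρhat j = (((k : ℂ) - 1)⁻¹ • ∑ i ∈ Finset.univ \ {j, l}, ρ i)
      + ((k : ℂ) - 1)⁻¹ • ρ l := by
    rw [hρhat j, ← smul_add]
    congr 1
    rw [Finset.sum_eq_sum_sdiff_singleton_add hmem1, hsdiff1]
  have hAC : ρhat l = (((k : ℂ) - 1)⁻¹ • ∑ i ∈ Finset.univ \ {j, l}, ρ i)
      + ((k : ℂ) - 1)⁻¹ • ρ j := by
    rw [hρhat l, ← smul_add]
    congr 1
    rw [Finset.sum_eq_sum_sdiff_singleton_add hmem2, hsdiff2]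
  -- trace of A
  have hcard : (Finset.univ \ ({j, l} : Finset (Fin k))).card = k - 2 := by
    rw [Finset.card_sdiff_of_subset (Finset.subset_univ _), Finset.card_univ, Fintype.card_fin]
    congr 1
    rw [Finset.card_insert_of_notMem (by simp [hjl]), Finset.card_singleton]
  have htrA : (((k : ℂ) - 1)⁻¹ • ∑ i ∈ Finset.univ \ {j, l}, ρ i).trace.re
      = ((k : ℝ) - 2) / ((k : ℝ) - 1) := by
    have h1 : (∑ i ∈ Finset.univ \ {j, l}, ρ i).trace = ((k - 2 : ℕ) : ℂ) := by
      rw [Matrix.trace_sum]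
      rw [Finset.sum_congr rfl (fun i _ => hρtr i), Finset.sum_const, hcard]
      simp
    rw [Matrix.trace_smul, hcast, h1, smul_eq_mul, ← Complex.ofReal_natCast,
      ← Complex.ofReal_mul, Complex.ofReal_re]
    have h2 : ((k - 2 : ℕ) : ℝ) = (k : ℝ) - 2 := by
      have : 2 ≤ k := by omega
      push_cast [this]
      ring
    rw [h2, inv_mul_eq_div]
  -- apply the key lemma
  have hfe : fidelity
      ((((k : ℂ) - 1)⁻¹ • ∑ i ∈ Finset.univ \ {j, l}, ρ i) + ((k : ℂ) - 1)⁻¹ • ρ l)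
      ((((k : ℂ) - 1)⁻¹ • ∑ i ∈ Finset.univ \ {j, l}, ρ i) + ((k : ℂ) - 1)⁻¹ • ρ j)
      = (((k : ℂ) - 1)⁻¹ • ∑ i ∈ Finset.univ \ {j, l}, ρ i).trace.re := by
    rw [← hAB, ← hAC, hfid j l hjl, htrA]
  have hzero := OrthKey.key hA hB hC hfe
  -- unfold the scalar factors
  have hexp : (((k : ℂ) - 1)⁻¹ • ρ l) * (((k : ℂ) - 1)⁻¹ • ρ j)
      = (((k : ℂ) - 1)⁻¹ * ((k : ℂ) - 1)⁻¹) • (ρ l * ρ j) := by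
    rw [Matrix.smul_mul, Matrix.mul_smul, smul_smul]
  rw [hexp, Matrix.trace_smul, smul_eq_mul, mul_eq_zero, mul_eq_zero] at hzero
  have hne : ((k : ℂ) - 1)⁻¹ ≠ 0 := inv_ne_zero hkc
  have : (ρ l * ρ j).trace = 0 := by tauto
  rw [Matrix.trace_mul_comm] at this
  exact this
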